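/- The classes T_TandG[M̂,F] and T_glob[M̂_msg, Q_time2vec, ∥] are incomparable: neither T_TandG[M̂,F] ≤ T_glob[M̂_msg, Q_time2vec, ∥] nor T_glob[M̂_msg, Q_time2vec, ∥] ≤ T_TandG[M̂,F] holds; in particular T_TandG[M̂,F] ≢ T_glob[M̂_msg, Q_time2vec, ∥]. -/

import Mathlib

set_option maxHeartbeats 1000000

/-! ### Vectors -/

/-- Real vectors of dimension `d`. -/
abbrev Vec (d : ℕ) := Fin d → ℝ

/-- Cast a vector along an equality of dimensions. -/
def Vec.cast {m n : ℕ} (h : m = n) (x : Vec m) : Vec n := fun j => x (Fin.cast h.symm j)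

/-- Truncated ReLU. -/
noncomputable def trReLU (x : ℝ) : ℝ := max 0 (min 1 x)

/-- A single FNN layer: an affine map with rational weights followed by entrywise trReLU. -/
structure AffineLayer (m n : ℕ) where
  weight : Fin n → Fin m → ℚ
  bias : Fin n → ℚ

noncomputable def AffineLayer.eval {m n : ℕ} (l : AffineLayer m n) (x : Vec m) : Vec n :=
  fun j => trReLU ((∑ i, (l.weight j i : ℝ) * x i) + (l.bias j : ℝ))

/-- A feedforward neural network with trReLU activations,
of input dimension `m` and output dimension `n`. -/
structure FNN (m n : ℕ) where
  depth : ℕ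
  dims : ℕ → ℕ
  dim_in : dims 0 = m
  dim_out : dims depth = n
  layers : ∀ i : ℕ, AffineLayer (dims i) (dims (i + 1))

noncomputable def FNN.evalAux {m n : ℕ} (N : FNN m n) : (i : ℕ) → Vec (N.dims 0) → Vec (N.dims i)
  | 0, x => x
  | i + 1, x => (N.layers i).eval (N.evalAux i x)

noncomputable def FNN.eval {m n : ℕ} (N : FNN m n) (x : Vec m) : Vec n :=
  Vec.cast N.dim_out (N.evalAux N.depth (Vec.cast N.dim_in.symm x))

/-! ### Message-passing GNNs -/

/-- A general message-passing GNN: a finite sequence of layers, each consisting of an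
arbitrary multiset-aggregation function and an arbitrary combination function. -/
structure MPNN where
  depth : ℕ
  dims : ℕ → ℕ
  aggDims : ℕ → ℕ
  agg : ∀ i : ℕ, Multiset (Vec (dims i)) → Vec (aggDims i)
  comb : ∀ i : ℕ, Vec (dims i) → Vec (aggDims i) → Vec (dims (i + 1))

/-- Embeddings computed by an MPNN on a labelled graph (given by a symmetric boolean
adjacency function and a labelling `c`). -/
noncomputable def MPNN.emb (M : MPNN) {V : Type} [Fintype V] [DecidableEq V]
    (adj : V → V → Bool) (c : V → Vec (M.dims 0)) : (i : ℕ) → V → Vec (M.dims i)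
  | 0 => c
  | i + 1 => fun v =>
      M.comb i (M.emb adj c i v)
        (M.agg i ((Finset.univ.filter fun u => adj v u = true).val.map
          fun u => M.emb adj c i u))

/-- The final embedding `M(G,v)`. -/
noncomputable def MPNN.run (M : MPNN) {V : Type} [Fintype V] [DecidableEq V]
    (adj : V → V → Bool) (c : V → Vec (M.dims 0)) (v : V) : Vec (M.dims M.depth) :=
  M.emb adj c M.depth v

/-- Entrywise sum of a multiset of vectors. -/
noncomputable def sumAgg (d : ℕ) (S : Multiset (Vec d)) : Vec d :=
  fun j => (S.map fun x => x j).sum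

/-- The class `M̂`: MPNNs whose combination functions are realised by FNNs with trReLU
activations and whose aggregation is the entrywise sum of the multiset. -/
structure MPNNhat where
  depth : ℕ
  dims : ℕ → ℕ
  comb : ∀ i : ℕ, FNN (dims i + dims i) (dims (i + 1))

noncomputable def MPNNhat.toMPNN (M : MPNNhat) : MPNN where
  depth := M.depth
  dims := M.dims
  aggDims := M.dims
  agg := fun i => sumAgg (M.dims i)
  comb := fun i x y => (M.comb i).eval (Fin.append x y)

/-! ### Discrete temporal graphs -/

/-- A discrete temporal graph over vertex set `V` with `k` colours: a sequence of `len`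
snapshots (indexed `0, …, len - 1`, the timestamp of index `i` being `i + 1`), each with a
symmetric set of undirected edges and a `{0,1}`-colouring of the nodes. -/
structure TemporalGraph (V : Type) (k : ℕ) where
  len : ℕ
  len_pos : 0 < len
  adj : ℕ → V → V → Bool
  symm : ∀ i u w, adj i u w = adj i w u
  label : ℕ → V → Fin k → Bool

/-- The colour vector of node `v` at time index `i`, as a real vector. -/
noncomputable def TemporalGraph.colVec {V : Type} {k : ℕ} (TG : TemporalGraph V k)
    (i : ℕ) (v : V) : Vec k :=
  fun j => if TG.label i v j then 1 else 0

/-! ### The product logic PTL_{P,Y} × K -/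

/-- Formulas of the product logic `PTL_{P,Y} × K` over `k` colour propositions. -/
inductive PTLK (k : ℕ) : Type where
  | colour : Fin k → PTLK k
  | not : PTLK k → PTLK k
  | and : PTLK k → PTLK k → PTLK k
  | dia : PTLK k → PTLK k
  | yest : PTLK k → PTLK k
  | past : PTLK k → PTLK k

/-- Satisfaction of a formula at timestamped node `(v, i)` (time indices start at `0`). -/
def Sat {V : Type} {k : ℕ} (TG : TemporalGraph V k) : PTLK k → ℕ → V → Prop
  | .colour j, i, v => TG.label i v j = true
  | .not φ, i, v => ¬ Sat TG φ i v
  | .and φ ψ, i, v => Sat TG φ i v ∧ Sat TG ψ i v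
  | .dia φ, i, v => ∃ u : V, TG.adj i v u = true ∧ Sat TG φ i u
  | .yest φ, i, v => 0 < i ∧ Sat TG φ (i - 1) v
  | .past φ, i, v => ∃ j < i, Sat TG φ j v

/-- The list of subformulas of a formula (containing the formula itself). -/
def PTLK.subformulas {k : ℕ} : PTLK k → List (PTLK k)
  | .colour j => [.colour j]
  | .not φ => .not φ :: φ.subformulas
  | .and φ ψ => .and φ ψ :: (φ.subformulas ++ ψ.subformulas)
  | .dia φ => .dia φ :: φ.subformulas
  | .yest φ => .yest φ :: φ.subformulas
  | .past φ => .past φ :: φ.subformulas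

/-- A formula is temporal if its outermost operator is `Y` or `P`. -/
def PTLK.isTemporal {k : ℕ} : PTLK k → Prop
  | .yest _ => True
  | .past _ => True
  | _ => False

/-- A formula is atomic if it is a colour proposition. -/
def PTLK.isAtomic {k : ℕ} : PTLK k → Prop
  | .colour _ => True
  | _ => False

/-! ### Recursive TGNNs over M̂ -/

/-- A recursive TGNN `T = (M, out)` with `M ∈ M̂`: the input dimension of `M` is
`k + d` where `d` is the output dimension of `M`, and `out` is a single-layer FNN with
trReLU activation. -/
structure RecTGNN (k : ℕ) where
  M : MPNNhat
  dim_in : M.dims 0 = k + M.dims M.depth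
  out : AffineLayer (M.dims M.depth) 1

/-- The state `h_v^{(depth)}(t_i)` computed by a recursive TGNN. -/
noncomputable def RecTGNN.state {k : ℕ} (T : RecTGNN k) {V : Type} [Fintype V] [DecidableEq V]
    (TG : TemporalGraph V k) : ℕ → V → Vec (T.M.dims T.M.depth)
  | 0 => fun v => T.M.toMPNN.run (TG.adj 0)
      (fun u => Vec.cast T.dim_in.symm (Fin.append (TG.colVec 0 u) (fun _ => 0))) v
  | i + 1 => fun v => T.M.toMPNN.run (TG.adj (i + 1))
      (fun u => Vec.cast T.dim_in.symm (Fin.append (TG.colVec (i + 1) u) (T.state TG i u))) v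

/-- The input labelling `h_v^{(0)}(t_i)` fed to `M` at time index `i`. -/
noncomputable def RecTGNN.input {k : ℕ} (T : RecTGNN k) {V : Type} [Fintype V] [DecidableEq V]
    (TG : TemporalGraph V k) : ℕ → V → Vec (T.M.dims 0)
  | 0 => fun u => Vec.cast T.dim_in.symm (Fin.append (TG.colVec 0 u) (fun _ => 0))
  | i + 1 => fun u => Vec.cast T.dim_in.symm (Fin.append (TG.colVec (i + 1) u) (T.state TG i u))

/-- The output `T(TG, v)` of a recursive TGNN at the last time index. -/
noncomputable def RecTGNN.output {k : ℕ} (T : RecTGNN k) {V : Type} [Fintype V] [DecidableEq V]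
    (TG : TemporalGraph V k) (v : V) : ℝ :=
  T.out.eval (T.state TG (TG.len - 1) v) 0

/-- `T` captures `φ`: on every discrete pointed temporal graph, `T` outputs `1`
iff `φ` is satisfied at the distinguished node at the last timestamp. -/
def RecTGNN.captures {k : ℕ} (T : RecTGNN k) (φ : PTLK k) : Prop :=
  ∀ (V : Type) [Fintype V] [DecidableEq V], ∀ (TG : TemporalGraph V k) (v : V),
    Sat TG φ (TG.len - 1) v ↔ T.output TG v = 1

/-! ### Time-and-graph TGNNs -/

/-- A time-and-graph TGNN `T = (M₁, M₂, Cell, out)` with arbitrary MPNNs `M₁, M₂` (of the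
same number of layers), arbitrary cell function and arbitrary output function. -/
structure TandGTGNN (k : ℕ) where
  M₁ : MPNN
  M₂ : MPNN
  sameDepth : M₁.depth = M₂.depth
  hdim : ℕ
  dim1 : M₁.dims 0 = k
  dim2 : M₂.dims 0 = hdim
  cell : Vec (M₁.dims M₁.depth) → Vec (M₂.dims M₂.depth) → Vec hdim
  out : Vec hdim → ℝ

noncomputable def TandGTGNN.state {k : ℕ} (T : TandGTGNN k) {V : Type} [Fintype V]
    [DecidableEq V] (TG : TemporalGraph V k) : ℕ → V → Vec T.hdim
  | 0 => fun v => T.cell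
      (T.M₁.run (TG.adj 0) (fun u => Vec.cast T.dim1.symm (TG.colVec 0 u)) v)
      (T.M₂.run (TG.adj 0) (fun _ => Vec.cast T.dim2.symm (fun _ => 0)) v)
  | i + 1 => fun v => T.cell
      (T.M₁.run (TG.adj (i + 1)) (fun u => Vec.cast T.dim1.symm (TG.colVec (i + 1) u)) v)
      (T.M₂.run (TG.adj (i + 1)) (fun u => Vec.cast T.dim2.symm (T.state TG i u)) v)

noncomputable def TandGTGNN.output {k : ℕ} (T : TandGTGNN k) {V : Type} [Fintype V]
    [DecidableEq V] (TG : TemporalGraph V k) (v : V) : ℝ :=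
  T.out (T.state TG (TG.len - 1) v)

def TandGTGNN.captures {k : ℕ} (T : TandGTGNN k) (φ : PTLK k) : Prop :=
  ∀ (V : Type) [Fintype V] [DecidableEq V], ∀ (TG : TemporalGraph V k) (v : V),
    Sat TG φ (TG.len - 1) v ↔ T.output TG v = 1

/-- Membership of a time-and-graph TGNN in the class `T_TandG[M̂, F]`: both MPNNs lie in
`M̂`, the cell is a single-layer FNN with trReLU activations, and so is the output. -/
def TandGTGNN.inHatF {k : ℕ} (T : TandGTGNN k) : Prop :=
  (∃ N₁ : MPNNhat, T.M₁ = N₁.toMPNN) ∧ (∃ N₂ : MPNNhat, T.M₂ = N₂.toMPNN) ∧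
  (∃ C : AffineLayer (T.M₁.dims T.M₁.depth + T.M₂.dims T.M₂.depth) T.hdim,
     ∀ x y, T.cell x y = C.eval (Fin.append x y)) ∧
  (∃ O : AffineLayer T.hdim 1, ∀ x, T.out x = O.eval x 0)

/-! ### Global TGNNs -/

/-- An operation combining an embedding vector with a time-feature vector of dimension `m`. -/
structure GlobOp (m : ℕ) where
  cdim : ℕ → ℕ
  op : ∀ d : ℕ, Vec d → Vec m → Vec (cdim d)

/-- A global TGNN `T = (M, φ', out)` with arbitrary MPNN components, arbitrary time
function, arbitrary combining operation and arbitrary output function. -/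
structure GlobTGNN (k : ℕ) where
  tdim : ℕ
  circ : GlobOp tdim
  timeFn : ℝ → Vec tdim
  depth : ℕ
  dims : ℕ → ℕ
  dim_in : dims 0 = k
  aggDims : ℕ → ℕ
  agg : ∀ i : ℕ, Multiset (Vec (circ.cdim (dims i))) → Vec (aggDims i)
  comb : ∀ i : ℕ, Vec (dims i) → Vec (aggDims i) → Vec (dims (i + 1))
  out : Vec (dims depth) → ℝ

/-- The embeddings `h_v^{(i)}(t_j)` computed by a global TGNN. -/
noncomputable def GlobTGNN.emb {k : ℕ} (T : GlobTGNN k) {V : Type} [Fintype V] [DecidableEq V]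
    (TG : TemporalGraph V k) : (i : ℕ) → ℕ → V → Vec (T.dims i)
  | 0 => fun j v => Vec.cast T.dim_in.symm (TG.colVec j v)
  | i + 1 => fun j v =>
      T.comb i (T.emb TG i j v)
        (T.agg i ((Finset.range (j + 1)).val.bind fun h =>
          (Finset.univ.filter fun u => TG.adj h v u = true).val.map
            fun u => T.circ.op _ (T.emb TG i h u) (T.timeFn ((j : ℝ) - (h : ℝ)))))

noncomputable def GlobTGNN.output {k : ℕ} (T : GlobTGNN k) {V : Type} [Fintype V]
    [DecidableEq V] (TG : TemporalGraph V k) (v : V) : ℝ :=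
  T.out (T.emb TG T.depth (TG.len - 1) v)

def GlobTGNN.captures {k : ℕ} (T : GlobTGNN k) (φ : PTLK k) : Prop :=
  ∀ (V : Type) [Fintype V] [DecidableEq V], ∀ (TG : TemporalGraph V k) (v : V),
    Sat TG φ (TG.len - 1) v ↔ T.output TG v = 1

/-- Vector concatenation as the combining operation `∥`. -/
def concatOp (m : ℕ) : GlobOp m where
  cdim := fun d => d + m
  op := fun _ x y => Fin.append x y

/-- A time2vec function. -/
structure Time2Vec (m : ℕ) where
  w : Fin m → ℚ
  b : Fin m → ℚ
  σ : ℝ → ℝ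
  period : ℝ
  period_pos : 0 < period
  periodic : Function.Periodic σ period

noncomputable def Time2Vec.eval {m : ℕ} (f : Time2Vec m) (t : ℝ) : Vec m :=
  fun j => if (j : ℕ) = 0 then (f.w j : ℝ) * t + (f.b j : ℝ)
           else f.σ ((f.w j : ℝ) * t + (f.b j : ℝ))

/-- The class `T_glob[M̂_msg, Q_time2vec, ∥]`: global TGNNs whose MPNN lies in `M̂_msg`
(combination functions given by trReLU FNNs and aggregation `agg S = Σ_{x∈S} msg(x)` with
`msg` a trReLU FNN), whose time function is a time2vec function, and whose combining
operation is vector concatenation; the output is a single-layer trReLU FNN. -/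
structure GlobTGNNmsg (k : ℕ) where
  tdim : ℕ
  timeFn : Time2Vec tdim
  depth : ℕ
  dims : ℕ → ℕ
  dim_in : dims 0 = k
  aggDims : ℕ → ℕ
  msg : ∀ i : ℕ, FNN (dims i + tdim) (aggDims i)
  comb : ∀ i : ℕ, FNN (dims i + aggDims i) (dims (i + 1))
  out : AffineLayer (dims depth) 1

noncomputable def GlobTGNNmsg.toGlob {k : ℕ} (T : GlobTGNNmsg k) : GlobTGNN k where
  tdim := T.tdim
  circ := concatOp T.tdim
  timeFn := T.timeFn.eval
  depth := T.depth
  dims := T.dims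
  dim_in := T.dim_in
  aggDims := T.aggDims
  agg := fun i S => sumAgg (T.aggDims i) (S.map (T.msg i).eval)
  comb := fun i x y => (T.comb i).eval (Fin.append x y)
  out := fun x => (T.out).eval x 0

noncomputable def GlobTGNNmsg.output {k : ℕ} (T : GlobTGNNmsg k) {V : Type} [Fintype V]
    [DecidableEq V] (TG : TemporalGraph V k) (v : V) : ℝ :=
  T.toGlob.output TG v

def GlobTGNNmsg.captures {k : ℕ} (T : GlobTGNNmsg k) (φ : PTLK k) : Prop :=
  ∀ (V : Type) [Fintype V] [DecidableEq V], ∀ (TG : TemporalGraph V k) (v : V),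
    Sat TG φ (TG.len - 1) v ↔ T.output TG v = 1

/-- `T_TandG[M̂,F] ≤ T_glob[M̂_msg, Q_time2vec, ∥]`. -/
def TandGleGlob : Prop :=
  ∀ (k : ℕ) (T : TandGTGNN k), T.inHatF →
    ∃ T' : GlobTGNNmsg k,
      ∀ (V : Type) [Fintype V] [DecidableEq V], ∀ (TG : TemporalGraph V k) (v : V),
        (T.output TG v = 1 ↔ T'.output TG v = 1)

/-- `T_glob[M̂_msg, Q_time2vec, ∥] ≤ T_TandG[M̂,F]`. -/
def GlobLeTandG : Prop :=
  ∀ (k : ℕ) (T : GlobTGNNmsg k),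
    ∃ T' : TandGTGNN k, T'.inHatF ∧
      ∀ (V : Type) [Fintype V] [DecidableEq V], ∀ (TG : TemporalGraph V k) (v : V),
        (T.output TG v = 1 ↔ T'.output TG v = 1)


/-! ### Auxiliary machinery -/

section Aux

open Filter Polynomial

lemma Vec.cast_eq {m : ℕ} (h : m = m) (x : Vec m) : Vec.cast h x = x := by
  funext j
  simp [Vec.cast, Fin.cast]

lemma Vec.cast_const {m n : ℕ} (h : m = n) (c : ℝ) :
    Vec.cast h (fun _ => c) = fun _ => c := rfl

lemma trReLU_of_one_le {x : ℝ} (h : 1 ≤ x) : trReLU x = 1 := by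
  simp [trReLU, min_eq_left h]

lemma trReLU_of_nonpos {x : ℝ} (h : x ≤ 0) : trReLU x = 0 := by
  simp [trReLU]
  exact Or.inr h

/-- Eventually polynomial functions `ℕ → ℝ`. -/
def EvPoly (f : ℕ → ℝ) : Prop :=
  ∃ p : Polynomial ℝ, ∃ D : ℕ, ∀ a ≥ D, f a = p.eval (a : ℝ)

/-- Eventually constant functions `ℕ → ℝ`. -/
def EvConst (f : ℕ → ℝ) : Prop :=
  ∃ D : ℕ, ∃ c : ℝ, ∀ a ≥ D, f a = c

lemma EvConst.evPoly {f : ℕ → ℝ} (h : EvConst f) : EvPoly f := by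
  obtain ⟨D, c, hD⟩ := h
  exact ⟨Polynomial.C c, D, fun a ha => by simp [hD a ha]⟩

lemma EvPoly.const (c : ℝ) : EvPoly fun _ => c :=
  ⟨Polynomial.C c, 0, fun a _ => by simp⟩

lemma EvPoly.natCast : EvPoly fun a => (a : ℝ) :=
  ⟨Polynomial.X, 0, fun a _ => by simp⟩

lemma EvPoly.add {f g : ℕ → ℝ} (hf : EvPoly f) (hg : EvPoly g) :
    EvPoly fun a => f a + g a := by
  obtain ⟨p, D, hp⟩ := hf; obtain ⟨q, E, hq⟩ := hg
  exact ⟨p + q, max D E, fun a ha => by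
    show f a + g a = _
    rw [hp a (le_trans (le_max_left _ _) ha), hq a (le_trans (le_max_right _ _) ha)]; simp⟩

lemma EvPoly.mul {f g : ℕ → ℝ} (hf : EvPoly f) (hg : EvPoly g) :
    EvPoly fun a => f a * g a := by
  obtain ⟨p, D, hp⟩ := hf; obtain ⟨q, E, hq⟩ := hg
  exact ⟨p * q, max D E, fun a ha => by
    show f a * g a = _
    rw [hp a (le_trans (le_max_left _ _) ha), hq a (le_trans (le_max_right _ _) ha)]; simp⟩

lemma EvPoly.sum {ι : Type*} (s : Finset ι) (f : ι → ℕ → ℝ)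
    (h : ∀ i ∈ s, EvPoly (f i)) : EvPoly fun a => ∑ i ∈ s, f i a := by
  classical
  induction s using Finset.induction with
  | empty => simpa using EvPoly.const 0
  | @insert x s' hx ih =>
      have h1 : EvPoly (f x) := h x (Finset.mem_insert_self _ _)
      have h2 : EvPoly fun a => ∑ i ∈ s', f i a :=
        ih fun i hi => h i (Finset.mem_insert_of_mem hi)
      simpa [Finset.sum_insert hx] using h1.add h2

/-- The key squashing lemma: `trReLU` of an eventually polynomial function is
eventually constant. -/
lemma EvPoly.trReLU_evConst {f : ℕ → ℝ} (hf : EvPoly f) :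
    EvConst fun a => trReLU (f a) := by
  obtain ⟨p, D, hp⟩ := hf
  rcases le_or_gt p.degree 0 with hdeg | hdeg
  · refine ⟨D, trReLU (p.coeff 0), fun a ha => ?_⟩
    show trReLU (f a) = _
    rw [hp a ha, Polynomial.eq_C_of_degree_le_zero hdeg]
    simp
  · rcases le_or_gt 0 p.leadingCoeff with hlc | hlc
    · have ht : Tendsto (fun a : ℕ => p.eval (a : ℝ)) atTop atTop :=
        (p.tendsto_atTop_of_leadingCoeff_nonneg hdeg hlc).comp tendsto_natCast_atTop_atTop
      obtain ⟨E, hE⟩ := (ht.eventually_ge_atTop 1).exists_forall_of_atTop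
      refine ⟨max D E, 1, fun a ha => ?_⟩
      show trReLU (f a) = _
      rw [hp a (le_trans (le_max_left _ _) ha)]
      exact trReLU_of_one_le (hE a (le_trans (le_max_right _ _) ha))
    · have ht : Tendsto (fun a : ℕ => p.eval (a : ℝ)) atTop atBot :=
        (p.tendsto_atBot_of_leadingCoeff_nonpos hdeg hlc.le).comp tendsto_natCast_atTop_atTop
      obtain ⟨E, hE⟩ := (ht.eventually_le_atBot 0).exists_forall_of_atTop
      refine ⟨max D E, 0, fun a ha => ?_⟩
      show trReLU (f a) = _
      rw [hp a (le_trans (le_max_left _ _) ha)]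
      exact trReLU_of_nonpos (hE a (le_trans (le_max_right _ _) ha))

end Aux

section Aux2

/-! ### sumAgg and single-layer FNNs -/

lemma sumAgg_replicate (d n : ℕ) (x : Vec d) :
    sumAgg d (Multiset.replicate n x) = fun j => (n : ℝ) * x j := by
  funext j
  simp [sumAgg, Multiset.map_replicate, Multiset.sum_replicate, nsmul_eq_mul]

lemma sumAgg_singleton (d : ℕ) (x : Vec d) : sumAgg d {x} = x := by
  funext j; simp [sumAgg]

lemma sumAgg_add (d : ℕ) (s t : Multiset (Vec d)) :
    sumAgg d (s + t) = fun j => sumAgg d s j + sumAgg d t j := by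
  funext j; simp [sumAgg]

lemma sumAgg_zero (d : ℕ) : sumAgg d 0 = fun _ => 0 := by
  funext j; simp [sumAgg]

/-- A single-layer FNN. -/
def mkFNN1 {m n : ℕ} (l : AffineLayer m n) : FNN m n where
  depth := 1
  dims := fun i => match i with | 0 => m | _ + 1 => n
  dim_in := rfl
  dim_out := rfl
  layers := fun i => match i with
    | 0 => l
    | _ + 1 => ⟨fun _ _ => 0, fun _ => 0⟩

lemma mkFNN1_eval {m n : ℕ} (l : AffineLayer m n) (x : Vec m) :
    (mkFNN1 l).eval x = l.eval x := by
  show Vec.cast _ ((mkFNN1 l).evalAux 1 (Vec.cast _ x)) = _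
  erw [Vec.cast_eq, Vec.cast_eq]
  rfl

/-! ### EvPoly preservation by FNNs -/

lemma AffineLayer.eval_evConst {m n : ℕ} (l : AffineLayer m n) (x : ℕ → Vec m)
    (hx : ∀ i, EvPoly fun a => x a i) :
    ∀ j, EvConst fun a => l.eval (x a) j := by
  intro j
  have h : EvPoly fun a => (∑ i, (l.weight j i : ℝ) * x a i) + (l.bias j : ℝ) := by
    refine EvPoly.add ?_ (EvPoly.const _)
    exact EvPoly.sum _ _ fun i _ => (EvPoly.const ((l.weight j i : ℝ))).mul (hx i)
  exact h.trReLU_evConst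

lemma AffineLayer.eval_evPoly {m n : ℕ} (l : AffineLayer m n) (x : ℕ → Vec m)
    (hx : ∀ i, EvPoly fun a => x a i) :
    ∀ j, EvPoly fun a => l.eval (x a) j :=
  fun j => (l.eval_evConst x hx j).evPoly

lemma Vec.cast_evPoly {m n : ℕ} (h : m = n) (x : ℕ → Vec m)
    (hx : ∀ i, EvPoly fun a => x a i) :
    ∀ j, EvPoly fun a => Vec.cast h (x a) j :=
  fun j => hx _

lemma FNN.eval_evPoly {m n : ℕ} (N : FNN m n) (x : ℕ → Vec m)
    (hx : ∀ i, EvPoly fun a => x a i) :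
    ∀ j, EvPoly fun a => N.eval (x a) j := by
  have haux : ∀ i : ℕ, ∀ j, EvPoly fun a => N.evalAux i (Vec.cast N.dim_in.symm (x a)) j := by
    intro i
    induction i with
    | zero => exact fun j => hx _
    | succ i ih =>
        intro j
        exact (N.layers i).eval_evPoly (fun a => N.evalAux i (Vec.cast N.dim_in.symm (x a))) ih j
  intro j
  exact haux N.depth _

lemma Fin.append_evPoly {m n : ℕ} (x : ℕ → Vec m) (y : ℕ → Vec n)
    (hx : ∀ i, EvPoly fun a => x a i) (hy : ∀ i, EvPoly fun a => y a i) :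
    ∀ j : Fin (m + n), EvPoly fun a => Fin.append (x a) (y a) j := by
  intro j
  induction j using Fin.addCases with
  | left i => simpa [Fin.append_left] using hx i
  | right i => simpa [Fin.append_right] using hy i

/-- A vector-valued function whose coordinates are all eventually constant is
eventually constant as a vector. -/
lemma vec_evConst {n : ℕ} (f : ℕ → Vec n) (h : ∀ j, EvConst fun a => f a j) :
    ∃ D : ℕ, ∀ a ≥ D, f a = f D := by
  classical
  choose Dj cj hj using h
  refine ⟨Finset.univ.sup Dj, fun a ha => ?_⟩
  funext j
  have hD : Dj j ≤ Finset.univ.sup Dj := Finset.le_sup (Finset.mem_univ j)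
  have h1 := hj j a (le_trans hD ha)
  have h2 := hj j (Finset.univ.sup Dj) hD
  simp only at h1 h2
  rw [h1, h2]

end Aux2

section Star

variable {V : Type} [Fintype V] [DecidableEq V]

/-- Star adjacency: centre `c₀`, leaves `S`. -/
def starAdj (c₀ : V) (S : Finset V) (u w : V) : Bool :=
  decide ((u = c₀ ∧ w ∈ S) ∨ (w = c₀ ∧ u ∈ S))

lemma starAdj_symm (c₀ : V) (S : Finset V) (u w : V) :
    starAdj c₀ S u w = starAdj c₀ S w u := by
  simp only [starAdj, decide_eq_decide]
  tauto

lemma starAdj_filter_center (c₀ : V) (S : Finset V) (hc : c₀ ∉ S) :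
    (Finset.univ.filter fun u => starAdj c₀ S c₀ u = true) = S := by
  ext u
  simp only [Finset.mem_filter, Finset.mem_univ, true_and, starAdj, decide_eq_true_eq]
  constructor
  · intro h
    rcases h with h | ⟨-, h⟩
    · exact h
    · exact absurd h hc
  · exact fun h => Or.inl h

lemma starAdj_filter_leaf (c₀ : V) (S : Finset V) (hc : c₀ ∉ S) {u : V} (hu : u ∈ S) :
    (Finset.univ.filter fun w => starAdj c₀ S u w = true) = {c₀} := by
  have hne : u ≠ c₀ := fun h => hc (h ▸ hu)
  ext w
  simp only [Finset.mem_filter, Finset.mem_univ, true_and, starAdj, decide_eq_true_eq,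
    Finset.mem_singleton]
  constructor
  · rintro (⟨h, -⟩ | ⟨h, -⟩)
    · exact absurd h hne
    · exact h
  · exact fun h => Or.inr ⟨h, hu⟩

lemma starAdj_filter_iso (c₀ : V) (S : Finset V) {u : V} (hne : u ≠ c₀) (hu : u ∉ S) :
    (Finset.univ.filter fun w => starAdj c₀ S u w = true) = ∅ := by
  ext w
  simp only [Finset.mem_filter, Finset.mem_univ, true_and, starAdj, decide_eq_true_eq,
    Finset.notMem_empty, iff_false]
  rintro (⟨h, -⟩ | ⟨-, h⟩)
  · exact hne h
  · exact hu h

/-- The abstract two-variable recurrence computed by an MPNN on a star with `n` leaves: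
first component is the centre, second is a leaf. -/
noncomputable def starSeq (M : MPNN) (n : ℕ) (x0 y0 : Vec (M.dims 0)) :
    (i : ℕ) → Vec (M.dims i) × Vec (M.dims i)
  | 0 => (x0, y0)
  | i + 1 =>
      let p := starSeq M n x0 y0 i
      (M.comb i p.1 (M.agg i (Multiset.replicate n p.2)),
       M.comb i p.2 (M.agg i {p.1}))

/-- MPNN embeddings on a star graph. -/
lemma star_emb (M : MPNN) (c₀ : V) (S : Finset V) (hc : c₀ ∉ S)
    (ℓ : V → Vec (M.dims 0)) (y0 : Vec (M.dims 0)) (hS : ∀ u ∈ S, ℓ u = y0) :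
    ∀ i : ℕ,
      (M.emb (starAdj c₀ S) ℓ i c₀ = (starSeq M S.card (ℓ c₀) y0 i).1) ∧
      (∀ u ∈ S, M.emb (starAdj c₀ S) ℓ i u = (starSeq M S.card (ℓ c₀) y0 i).2) ∧
      (∀ u, u ≠ c₀ → u ∉ S → M.emb (starAdj c₀ S) ℓ i u = (starSeq M 0 (ℓ u) (ℓ u) i).1) := by
  intro i
  induction i with
  | zero =>
      refine ⟨rfl, fun u hu => ?_, fun u _ _ => rfl⟩
      exact hS u hu
  | succ i ih =>
      obtain ⟨ihc, ihl, ihi⟩ := ih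
      refine ⟨?_, ?_, ?_⟩
      · show M.comb i _ (M.agg i _) = M.comb i _ (M.agg i _)
        rw [ihc, starAdj_filter_center c₀ S hc]
        congr 1
        have : S.val.map (M.emb (starAdj c₀ S) ℓ i) =
            S.val.map (fun _ => (starSeq M S.card (ℓ c₀) y0 i).2) :=
          Multiset.map_congr rfl (fun u hu => ihl u hu)
        rw [this, Multiset.map_const']
        rfl
      · intro u hu
        show M.comb i _ (M.agg i _) = M.comb i _ (M.agg i _)
        rw [ihl u hu, starAdj_filter_leaf c₀ S hc hu]
        congr 1
        rw [Finset.singleton_val, Multiset.map_singleton, ihc]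
      · intro u hne hu
        show M.comb i _ (M.agg i _) = M.comb i _ (M.agg i _)
        rw [ihi u hne hu, starAdj_filter_iso c₀ S hne hu]
        show M.comb i _ (M.agg i (Multiset.map _ 0)) =
          M.comb i _ (M.agg i (Multiset.replicate 0 _))
        rw [Multiset.map_zero, Multiset.replicate_zero]

/-- For an `M̂`-MPNN, the coordinates of the star recurrence are eventually polynomial
functions of the number of leaves. -/
lemma starSeq_evPoly (N : MPNNhat) (x0 y0 : Vec (N.dims 0)) :
    ∀ i : ℕ,
      (∀ j, EvPoly fun a => (starSeq N.toMPNN a x0 y0 i).1 j) ∧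
      (∀ j, EvPoly fun a => (starSeq N.toMPNN a x0 y0 i).2 j) := by
  intro i
  induction i with
  | zero => exact ⟨fun j => EvPoly.const _, fun j => EvPoly.const _⟩
  | succ i ih =>
      obtain ⟨ihU, ihW⟩ := ih
      constructor
      · intro j
        show EvPoly fun a => (N.comb i).eval
          (Fin.append ((starSeq N.toMPNN a x0 y0 i).1)
            (sumAgg _ (Multiset.replicate a ((starSeq N.toMPNN a x0 y0 i).2)))) j
        refine (N.comb i).eval_evPoly _ ?_ j
        refine Fin.append_evPoly _ _ ihU ?_
        intro j'
        have : ∀ a : ℕ, sumAgg (N.dims i) (Multiset.replicate a ((starSeq N.toMPNN a x0 y0 i).2)) j'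
            = (a : ℝ) * (starSeq N.toMPNN a x0 y0 i).2 j' := by
          intro a; exact congrFun (sumAgg_replicate _ _ _) j'
        simp only [this]
        exact EvPoly.natCast.mul (ihW j')
      · intro j
        show EvPoly fun a => (N.comb i).eval
          (Fin.append ((starSeq N.toMPNN a x0 y0 i).2)
            (sumAgg _ {(starSeq N.toMPNN a x0 y0 i).1})) j
        refine (N.comb i).eval_evPoly _ ?_ j
        refine Fin.append_evPoly _ _ ihW ?_
        intro j'
        convert ihU j' using 2 with a
        exact congrFun (sumAgg_singleton _ _) j'

end Star

/-! ### Direction 1: `T_TandG[M̂,F] ≰ T_glob` -/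

section Dir1

/-- Depth-0 MPNN in `M̂` of dimension 1 (the identity on labels). -/
noncomputable def N0 : MPNNhat where
  depth := 0
  dims := fun _ => 1
  comb := fun _ => mkFNN1 ⟨fun _ _ => 0, fun _ => 0⟩

lemma N0_run {V : Type} [Fintype V] [DecidableEq V] (adj : V → V → Bool)
    (c : V → Vec 1) (v : V) : N0.toMPNN.run adj c v = c v := rfl

/-- cell layer: `trReLU (x + y)`. -/
def Ccell : AffineLayer (1 + 1) 1 := ⟨fun _ _ => 1, fun _ => 0⟩

/-- output layer: `trReLU x`. -/
def Oid : AffineLayer 1 1 := ⟨fun _ _ => 1, fun _ => 0⟩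

lemma Ccell_eval (x y : Vec 1) (j : Fin 1) :
    Ccell.eval (Fin.append x y) j = trReLU (x 0 + y 0) := by
  have h0 : Fin.append x y (0 : Fin (1 + 1)) = x 0 := rfl
  have h1 : Fin.append x y (Fin.succ 0 : Fin (1 + 1)) = y 0 := rfl
  have h2 : Fin.append x y (1 : Fin (1 + 1)) = y 0 := rfl
  simp [AffineLayer.eval, Ccell, Fin.sum_univ_succ, h0, h1, h2]

lemma Oid_eval (x : Vec 1) : Oid.eval x 0 = trReLU (x 0) := by
  simp [AffineLayer.eval, Oid, Fin.sum_univ_one]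

/-- The time-and-graph TGNN computing `P c ∨ c` (has colour now or in the past),
on edgeless graphs. -/
noncomputable def T1 : TandGTGNN 1 where
  M₁ := N0.toMPNN
  M₂ := N0.toMPNN
  sameDepth := rfl
  hdim := 1
  dim1 := rfl
  dim2 := rfl
  cell := fun x y => Ccell.eval (Fin.append x y)
  out := fun x => Oid.eval x 0

lemma T1_inHatF : T1.inHatF :=
  ⟨⟨N0, rfl⟩, ⟨N0, rfl⟩, ⟨Ccell, fun _ _ => rfl⟩, ⟨Oid, fun _ => rfl⟩⟩

/-- Temporal graph on one node, no edges, coloured at time 0 only. -/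
def TGA : TemporalGraph (Fin 1) 1 where
  len := 2
  len_pos := by omega
  adj := fun _ _ _ => false
  symm := fun _ _ _ => rfl
  label := fun i _ _ => i == 0

/-- Temporal graph on one node, no edges, never coloured. -/
def TGB : TemporalGraph (Fin 1) 1 where
  len := 2
  len_pos := by omega
  adj := fun _ _ _ => false
  symm := fun _ _ _ => rfl
  label := fun _ _ _ => false

lemma TGA_colVec0 (v : Fin 1) : TGA.colVec 0 v = fun _ => 1 := by
  funext j; simp [TemporalGraph.colVec, TGA]

lemma TGA_colVec1 (v : Fin 1) : TGA.colVec 1 v = fun _ => 0 := by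
  funext j; simp [TemporalGraph.colVec, TGA]

lemma TGB_colVec (i : ℕ) (v : Fin 1) : TGB.colVec i v = fun _ => 0 := by
  funext j; simp [TemporalGraph.colVec, TGB]

lemma T1_state_TGA_0 (v : Fin 1) : T1.state TGA 0 v = fun _ => 1 := by
  funext j
  show Ccell.eval (Fin.append _ _) j = 1
  erw [Ccell_eval]
  have hA : T1.M₁.run (TGA.adj 0) (fun u => Vec.cast T1.dim1.symm (TGA.colVec 0 u)) v (0 : Fin 1)
      = TGA.colVec 0 v 0 := rfl
  have hB : T1.M₂.run (TGA.adj 0) (fun _ => Vec.cast T1.dim2.symm fun _ => (0:ℝ)) v (0 : Fin 1)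
      = 0 := rfl
  rw [hA, hB]
  have hc : TGA.colVec 0 v 0 = 1 := by rw [TGA_colVec0]
  rw [hc]
  norm_num [trReLU]

lemma T1_state_TGA_1 (v : Fin 1) : T1.state TGA 1 v = fun _ => 1 := by
  funext j
  show Ccell.eval (Fin.append _ _) j = 1
  erw [Ccell_eval]
  have hA : T1.M₁.run (TGA.adj (0+1)) (fun u => Vec.cast T1.dim1.symm (TGA.colVec (0+1) u)) v
      (0 : Fin 1) = TGA.colVec 1 v 0 := rfl
  have hB : T1.M₂.run (TGA.adj (0+1)) (fun u => Vec.cast T1.dim2.symm (T1.state TGA 0 u)) v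
      (0 : Fin 1) = T1.state TGA 0 v (0 : Fin 1) := rfl
  rw [hA, hB]
  have hc : TGA.colVec 1 v 0 = 0 := by rw [TGA_colVec1]
  have hs : T1.state TGA 0 v (0 : Fin 1) = 1 := by rw [T1_state_TGA_0]
  rw [hc, hs]
  norm_num [trReLU]

lemma T1_state_TGB (i : ℕ) (v : Fin 1) : i ≤ 1 → T1.state TGB i v = fun _ => 0 := by
  intro hi
  match i, hi with
  | 0, _ =>
      funext j
      show Ccell.eval (Fin.append _ _) j = 0
      erw [Ccell_eval]
      have hA : T1.M₁.run (TGB.adj 0) (fun u => Vec.cast T1.dim1.symm (TGB.colVec 0 u)) v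
          (0 : Fin 1) = TGB.colVec 0 v 0 := rfl
      have hB : T1.M₂.run (TGB.adj 0) (fun _ => Vec.cast T1.dim2.symm fun _ => (0:ℝ)) v
          (0 : Fin 1) = 0 := rfl
      rw [hA, hB]
      have hc : TGB.colVec 0 v 0 = 0 := by rw [TGB_colVec]
      rw [hc]
      norm_num [trReLU]
  | 1, _ =>
      funext j
      show Ccell.eval (Fin.append _ _) j = 0
      erw [Ccell_eval]
      have hA : T1.M₁.run (TGB.adj (0+1)) (fun u => Vec.cast T1.dim1.symm (TGB.colVec (0+1) u)) v
          (0 : Fin 1) = TGB.colVec 1 v 0 := rfl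
      have hB : T1.M₂.run (TGB.adj (0+1)) (fun u => Vec.cast T1.dim2.symm (T1.state TGB 0 u)) v
          (0 : Fin 1) = T1.state TGB 0 v (0 : Fin 1) := rfl
      rw [hA, hB]
      have hc : TGB.colVec 1 v 0 = 0 := by rw [TGB_colVec]
      have hs : T1.state TGB 0 v (0 : Fin 1) = 0 := by rw [T1_state_TGB 0 v (by omega)]
      rw [hc, hs]
      norm_num [trReLU]

lemma T1_output_TGA : T1.output TGA 0 = 1 := by
  show Oid.eval (T1.state TGA (TGA.len - 1) 0) 0 = 1
  have : TGA.len - 1 = 1 := rfl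
  erw [this, Oid_eval, T1_state_TGA_1]
  norm_num [trReLU]

lemma T1_output_TGB : T1.output TGB 0 = 0 := by
  show Oid.eval (T1.state TGB (TGB.len - 1) 0) 0 = 0
  have : TGB.len - 1 = 1 := rfl
  erw [this, Oid_eval, T1_state_TGB 1 0 (by omega)]
  norm_num [trReLU]

/-- On edgeless temporal graphs a global TGNN only sees the colours at the output time. -/
lemma glob_edgeless {k : ℕ} (T : GlobTGNNmsg k) {V : Type} [Fintype V] [DecidableEq V]
    (TG TG' : TemporalGraph V k)
    (hadj : ∀ i u w, TG.adj i u w = false) (hadj' : ∀ i u w, TG'.adj i u w = false)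
    (j : ℕ) (v : V) (hcol : TG.colVec j v = TG'.colVec j v) :
    ∀ i, T.toGlob.emb TG i j v = T.toGlob.emb TG' i j v := by
  intro i
  induction i with
  | zero =>
      show Vec.cast (T.toGlob.dim_in).symm (TG.colVec j v)
         = Vec.cast (T.toGlob.dim_in).symm (TG'.colVec j v)
      rw [hcol]
  | succ i ih =>
      show T.toGlob.comb i _ (T.toGlob.agg i _) = T.toGlob.comb i _ (T.toGlob.agg i _)
      rw [ih]
      congr 2
      · have e1 : ∀ h : ℕ, (Finset.univ.filter fun u => TG.adj h v u = true) = ∅ := by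
          intro h; ext u; simp [hadj]
        have e2 : ∀ h : ℕ, (Finset.univ.filter fun u => TG'.adj h v u = true) = ∅ := by
          intro h; ext u; simp [hadj']
        simp [e1, e2]

end Dir1

lemma not_TandGleGlob : ¬ TandGleGlob := by
  intro h
  obtain ⟨T', hT'⟩ := h 1 T1 T1_inHatF
  have hA := (hT' (Fin 1) TGA 0).mp T1_output_TGA
  have hB : ¬ T'.output TGB 0 = 1 := by
    intro hc
    have := (hT' (Fin 1) TGB 0).mpr hc
    rw [T1_output_TGB] at this
    norm_num at this
  have heq : T'.output TGA 0 = T'.output TGB 0 := by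
    show T'.toGlob.out (T'.toGlob.emb TGA T'.toGlob.depth (TGA.len - 1) 0)
       = T'.toGlob.out (T'.toGlob.emb TGB T'.toGlob.depth (TGB.len - 1) 0)
    have h1 : TGA.len - 1 = 1 := rfl
    have h2 : TGB.len - 1 = 1 := rfl
    rw [h1, h2]
    have := glob_edgeless T' TGA TGB (fun _ _ _ => rfl) (fun _ _ _ => rfl)
      1 0 (by rw [TGA_colVec1, TGB_colVec]) T'.toGlob.depth
    rw [this]
  exact hB (heq ▸ hA)

/-! ### Direction 2: `T_glob ≰ T_TandG[M̂,F]` -/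

section Dir2

lemma sum_fin2 (f : Fin (1 + 1) → ℝ) : ∑ i, f i = f 0 + f 1 := Fin.sum_univ_two f

lemma sum_fin3 (f : Fin (1 + 2) → ℝ) : ∑ i, f i = f 0 + f 1 + f 2 := Fin.sum_univ_three f

/-- time2vec with a single (linear) coordinate `t ↦ t`. -/
noncomputable def tv1 : Time2Vec 1 :=
  ⟨fun _ => 1, fun _ => 0, fun _ => 0, 1, one_pos, fun _ => rfl⟩

lemma tv1_eval (t : ℝ) : tv1.eval t = fun _ : Fin 1 => t := by
  funext j
  have hj : (j : ℕ) = 0 := by omega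
  simp [Time2Vec.eval, tv1, hj]

/-- message layer: `(colour, t) ↦ (trReLU t, trReLU (1 - t))`. -/
def msgL : AffineLayer (1 + 1) 2 :=
  ⟨fun o i => if o = 0 then (if i = 1 then 1 else 0) else (if i = 1 then -1 else 0),
   fun o => if o = 0 then 0 else 1⟩

/-- combination layer: `(c, A, B) ↦ trReLU (A - B)`. -/
def combL : AffineLayer (1 + 2) 1 :=
  ⟨fun _ i => if i = 1 then 1 else if i = 2 then -1 else 0, fun _ => 0⟩

lemma msgL_eval0 (x y : Vec 1) :
    msgL.eval (Fin.append x y) 0 = trReLU (y 0) := by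
  show trReLU ((∑ i, ((msgL.weight 0 i : ℝ)) * Fin.append x y i) + ((msgL.bias 0 : ℝ))) = _
  rw [sum_fin2]
  have h0 : Fin.append x y (0 : Fin (1 + 1)) = x 0 := rfl
  have h1 : Fin.append x y (1 : Fin (1 + 1)) = y 0 := rfl
  rw [h0, h1]
  norm_num [msgL]

lemma msgL_eval1 (x y : Vec 1) :
    msgL.eval (Fin.append x y) 1 = trReLU (1 - y 0) := by
  show trReLU ((∑ i, ((msgL.weight 1 i : ℝ)) * Fin.append x y i) + ((msgL.bias 1 : ℝ))) = _
  rw [sum_fin2]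
  have h0 : Fin.append x y (0 : Fin (1 + 1)) = x 0 := rfl
  have h1 : Fin.append x y (1 : Fin (1 + 1)) = y 0 := rfl
  rw [h0, h1]
  have : ((1 : Fin 2) = 0) = False := by simp [Fin.ext_iff]
  norm_num [msgL, this]
  ring_nf

lemma combL_eval (x : Vec 1) (y : Vec 2) (j : Fin 1) :
    combL.eval (Fin.append x y) j = trReLU (y 0 - y 1) := by
  show trReLU ((∑ i, ((combL.weight j i : ℝ)) * Fin.append x y i) + ((combL.bias j : ℝ))) = _
  rw [sum_fin3]
  have h0 : Fin.append x y (0 : Fin (1 + 2)) = x 0 := rfl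
  have h1 : Fin.append x y (1 : Fin (1 + 2)) = y 0 := rfl
  have h2 : Fin.append x y (2 : Fin (1 + 2)) = y 1 := rfl
  rw [h0, h1, h2]
  have e1 : ((0 : Fin 3) = 1) = False := by simp [Fin.ext_iff]
  have e2 : ((0 : Fin 3) = 2) = False := by simp [Fin.ext_iff]
  have e3 : ((1 : Fin 3) = 2) = False := by simp [Fin.ext_iff]
  have e4 : ((2 : Fin 3) = 1) = False := by simp [Fin.ext_iff]
  norm_num [combL, e1, e2, e3, e4]
  ring_nf

/-- The separating global TGNN: `trReLU(Σ edges · 1[age=1] − Σ edges · 1[age=0])`. -/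
noncomputable def Tg : GlobTGNNmsg 1 where
  tdim := 1
  timeFn := tv1
  depth := 1
  dims := fun _ => 1
  dim_in := rfl
  aggDims := fun _ => 2
  msg := fun _ => mkFNN1 msgL
  comb := fun _ => mkFNN1 combL
  out := Oid

/-- The leaves at time 0: vertices `1, …, a`. -/
def SA (a b : ℕ) : Finset (Fin (a + b + 1)) :=
  Finset.univ.map ⟨fun t : Fin a => ⟨t.val + 1, by omega⟩, by
    intro x y h
    apply Fin.ext
    have := congrArg Fin.val h
    simpa using this⟩

/-- The leaves at time 1: vertices `a+1, …, a+b`. -/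
def SB (a b : ℕ) : Finset (Fin (a + b + 1)) :=
  Finset.univ.map ⟨fun t : Fin b => ⟨a + 1 + t.val, by omega⟩, by
    intro x y h
    apply Fin.ext
    have := congrArg Fin.val h
    simpa using this⟩

lemma mem_SA {a b : ℕ} {u : Fin (a + b + 1)} :
    u ∈ SA a b ↔ 1 ≤ u.val ∧ u.val ≤ a := by
  simp only [SA, Finset.mem_map, Finset.mem_univ, true_and, Function.Embedding.coeFn_mk]
  constructor
  · rintro ⟨t, rfl⟩; exact ⟨Nat.le_add_left 1 t.val, t.isLt⟩
  · rintro ⟨h1, h2⟩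
    refine ⟨⟨u.val - 1, by omega⟩, ?_⟩
    apply Fin.ext; show u.val - 1 + 1 = u.val; omega

lemma mem_SB {a b : ℕ} {u : Fin (a + b + 1)} :
    u ∈ SB a b ↔ a + 1 ≤ u.val := by
  simp only [SB, Finset.mem_map, Finset.mem_univ, true_and, Function.Embedding.coeFn_mk]
  constructor
  · rintro ⟨t, rfl⟩; exact Nat.le_add_right (a + 1) t.val
  · intro h1
    have hu := u.isLt
    refine ⟨⟨u.val - (a + 1), by omega⟩, ?_⟩
    apply Fin.ext
    show a + 1 + (u.val - (a + 1)) = u.val; omega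

lemma card_SA (a b : ℕ) : (SA a b).card = a := by
  simp [SA]

lemma card_SB (a b : ℕ) : (SB a b).card = b := by
  simp [SB]

lemma zero_not_mem_SA (a b : ℕ) : (0 : Fin (a + b + 1)) ∉ SA a b := by
  rw [mem_SA]; simp

lemma zero_not_mem_SB (a b : ℕ) : (0 : Fin (a + b + 1)) ∉ SB a b := by
  rw [mem_SB]; simp

lemma SB_ne_zero {a b : ℕ} {u : Fin (a + b + 1)} (h : u ∈ SB a b) : u ≠ 0 := by
  rw [mem_SB] at h
  intro hc
  rw [hc] at h
  simp at h

lemma SB_not_mem_SA {a b : ℕ} {u : Fin (a + b + 1)} (h : u ∈ SB a b) : u ∉ SA a b := by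
  rw [mem_SB] at h
  rw [mem_SA]
  omega

/-- The two-snapshot star temporal graph: at time 0 the centre `0` is joined to `a`
leaves, at time 1 to `b` fresh leaves; all colours are `false`. -/
def TG2 (a b : ℕ) : TemporalGraph (Fin (a + b + 1)) 1 where
  len := 2
  len_pos := by omega
  adj := fun i => match i with
    | 0 => starAdj 0 (SA a b)
    | 1 => starAdj 0 (SB a b)
    | _ + 2 => fun _ _ => false
  symm := by
    intro i u w
    match i with
    | 0 => exact starAdj_symm _ _ _ _
    | 1 => exact starAdj_symm _ _ _ _
    | n + 2 => rfl
  label := fun _ _ _ => false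

lemma TG2_colVec (a b : ℕ) (i : ℕ) (u : Fin (a + b + 1)) :
    (TG2 a b).colVec i u = fun _ => 0 := by
  funext j
  simp [TemporalGraph.colVec, TG2]

lemma TG2_adj0 (a b : ℕ) : (TG2 a b).adj 0 = starAdj 0 (SA a b) := rfl

lemma TG2_adj1 (a b : ℕ) : (TG2 a b).adj 1 = starAdj 0 (SB a b) := rfl

end Dir2

section Dir2b

lemma card_SA_val (a b : ℕ) : Multiset.card (SA a b).val = a := card_SA a b

lemma card_SB_val (a b : ℕ) : Multiset.card (SB a b).val = b := card_SB a b

lemma Tg_emb0 (a b : ℕ) (h : ℕ) (u : Fin (a + b + 1)) :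
    Tg.toGlob.emb (TG2 a b) 0 h u = fun _ => (0 : ℝ) := by
  show Vec.cast (Tg.toGlob.dim_in).symm ((TG2 a b).colVec h u) = _
  rw [TG2_colVec]
  rfl

lemma Tg_timeFn (t : ℝ) : Tg.toGlob.timeFn t = fun _ : Fin 1 => t := tv1_eval t

lemma Tg_output (a b : ℕ) :
    Tg.output (TG2 a b) 0 = trReLU (trReLU ((a : ℝ) - (b : ℝ))) := by
  have hfil0 : (Finset.univ.filter fun u => (TG2 a b).adj 0 (0 : Fin (a+b+1)) u = true)
      = SA a b := by
    rw [TG2_adj0]; exact starAdj_filter_center _ _ (zero_not_mem_SA a b)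
  have hfil1 : (Finset.univ.filter fun u => (TG2 a b).adj 1 (0 : Fin (a+b+1)) u = true)
      = SB a b := by
    rw [TG2_adj1]; exact starAdj_filter_center _ _ (zero_not_mem_SB a b)
  have hEMB : Tg.toGlob.emb (TG2 a b) 1 1 (0 : Fin (a+b+1))
      = fun _ : Fin 1 => trReLU ((a:ℝ) - (b:ℝ)) := by
    funext j
    show (mkFNN1 combL).eval (Fin.append (Tg.toGlob.emb (TG2 a b) 0 1 0)
      (Tg.toGlob.agg 0 ((Finset.range (1+1)).val.bind fun h =>
        ((Finset.univ.filter fun u => (TG2 a b).adj h (0 : Fin (a+b+1)) u = true)).val.map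
          fun u => Fin.append (Tg.toGlob.emb (TG2 a b) 0 h u)
            (Tg.toGlob.timeFn (((1:ℕ) : ℝ) - ((h:ℕ) : ℝ)))))) j = _
    erw [mkFNN1_eval, combL_eval]
    have hrange : (Finset.range (1 + 1)).val = (1 : ℕ) ::ₘ (0 : ℕ) ::ₘ 0 := by
      simp [Finset.range_val, Multiset.range_succ]
    rw [hrange, Multiset.cons_bind, Multiset.cons_bind, Multiset.zero_bind, hfil1, hfil0]
    have hm1 : (SB a b).val.map (fun u => Fin.append (Tg.toGlob.emb (TG2 a b) 0 1 u)
        (Tg.toGlob.timeFn (((1:ℕ) : ℝ) - (((1:ℕ):ℕ) : ℝ))))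
        = Multiset.replicate b (@Fin.append 1 1 ℝ (fun _ => (0:ℝ))
            (Tg.toGlob.timeFn (((1:ℕ) : ℝ) - (((1:ℕ):ℕ) : ℝ)))) := by
      rw [Multiset.map_congr rfl (fun u _ => by rw [Tg_emb0]), Multiset.map_const',
        card_SB_val]
      rfl
    have hm0 : (SA a b).val.map (fun u => Fin.append (Tg.toGlob.emb (TG2 a b) 0 0 u)
        (Tg.toGlob.timeFn (((1:ℕ) : ℝ) - (((0:ℕ):ℕ) : ℝ))))
        = Multiset.replicate a (@Fin.append 1 1 ℝ (fun _ => (0:ℝ))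
            (Tg.toGlob.timeFn (((1:ℕ) : ℝ) - (((0:ℕ):ℕ) : ℝ)))) := by
      rw [Multiset.map_congr rfl (fun u _ => by rw [Tg_emb0]), Multiset.map_const',
        card_SA_val]
      rfl
    erw [hm1, hm0]
    have haggval : ∀ (w1 w0 : Vec (Tg.toGlob.circ.cdim (Tg.toGlob.dims 0))) (j' : Fin 2),
        Tg.toGlob.agg 0 (Multiset.replicate b w1 + (Multiset.replicate a w0 + 0)) j'
        = (b:ℝ) * (mkFNN1 msgL).eval w1 j' + (a:ℝ) * (mkFNN1 msgL).eval w0 j' := by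
      intro w1 w0 j'
      show sumAgg 2 ((Multiset.replicate b w1 + (Multiset.replicate a w0 + 0)).map
        (mkFNN1 msgL).eval) j' = _
      erw [add_zero, Multiset.map_add, Multiset.map_replicate, Multiset.map_replicate,
        sumAgg_add, sumAgg_replicate, sumAgg_replicate]
    have hmsgA : ∀ t : ℝ,
        (mkFNN1 msgL).eval (@Fin.append 1 1 ℝ (fun _ => (0:ℝ)) (Tg.toGlob.timeFn t)) 0
          = trReLU t := by
      intro t
      erw [mkFNN1_eval, msgL_eval0, Tg_timeFn]
    have hmsgB : ∀ t : ℝ,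
        (mkFNN1 msgL).eval (@Fin.append 1 1 ℝ (fun _ => (0:ℝ)) (Tg.toGlob.timeFn t)) 1
          = trReLU (1 - t) := by
      intro t
      erw [mkFNN1_eval, msgL_eval1, Tg_timeFn]
    erw [haggval _ _ 0, haggval _ _ 1, hmsgA, hmsgA, hmsgB, hmsgB]
    have c1 : (((1:ℕ) : ℝ) - (((1:ℕ):ℕ) : ℝ)) = 0 := by norm_num
    have c0 : (((1:ℕ) : ℝ) - (((0:ℕ):ℕ) : ℝ)) = 1 := by norm_num
    rw [c1, c0]
    have t0 : trReLU (0:ℝ) = 0 := trReLU_of_nonpos le_rfl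
    have t1 : trReLU (1:ℝ) = 1 := trReLU_of_one_le le_rfl
    have t10 : trReLU ((1:ℝ) - 0) = 1 := by norm_num [trReLU_of_one_le]
    have t11 : trReLU ((1:ℝ) - 1) = 0 := by norm_num [t0]
    rw [t0, t1, t10, t11]
    congr 1
    ring
  show Oid.eval (Tg.toGlob.emb (TG2 a b) 1 ((TG2 a b).len - 1) 0) 0 = _
  have hlen : (TG2 a b).len - 1 = 1 := rfl
  rw [hlen, hEMB, Oid_eval]

end Dir2b

section Dir2c

lemma MPNN.run_def (M : MPNN) {V : Type} [Fintype V] [DecidableEq V]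
    (adj : V → V → Bool) (c : V → Vec (M.dims 0)) (v : V) :
    M.run adj c v = M.emb adj c M.depth v := rfl

/-- The all-zeros input vector. -/
noncomputable def zz (N : MPNNhat) : Vec (N.toMPNN.dims 0) := fun _ => 0

/-- A generic time-and-graph TGNN in `T_TandG[M̂,F]` with colour dimension 1. -/
noncomputable def TT (N₁ N₂ : MPNNhat) (sd : N₁.toMPNN.depth = N₂.toMPNN.depth) (hdim : ℕ)
    (dim1 : N₁.toMPNN.dims 0 = 1) (dim2 : N₂.toMPNN.dims 0 = hdim)
    (C : AffineLayer (N₁.toMPNN.dims N₁.toMPNN.depth + N₂.toMPNN.dims N₂.toMPNN.depth) hdim)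
    (O : AffineLayer hdim 1) : TandGTGNN 1 :=
  ⟨N₁.toMPNN, N₂.toMPNN, sd, hdim, dim1, dim2,
   fun x y => C.eval (Fin.append x y), fun x => O.eval x 0⟩

/-- The state of the centre of the star after the first snapshot, as a function of the
number `a` of leaves. -/
noncomputable def sC (N₁ N₂ : MPNNhat) {hdim : ℕ}
    (C : AffineLayer (N₁.toMPNN.dims N₁.toMPNN.depth + N₂.toMPNN.dims N₂.toMPNN.depth) hdim)
    (a : ℕ) : Vec hdim :=
  C.eval (Fin.append ((starSeq N₁.toMPNN a (zz N₁) (zz N₁) N₁.toMPNN.depth).1)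
                     ((starSeq N₂.toMPNN a (zz N₂) (zz N₂) N₂.toMPNN.depth).1))

variable (N₁ N₂ : MPNNhat) (sd : N₁.toMPNN.depth = N₂.toMPNN.depth) (hdim : ℕ)
  (dim1 : N₁.toMPNN.dims 0 = 1) (dim2 : N₂.toMPNN.dims 0 = hdim)
  (C : AffineLayer (N₁.toMPNN.dims N₁.toMPNN.depth + N₂.toMPNN.dims N₂.toMPNN.depth) hdim)
  (O : AffineLayer hdim 1) (a b : ℕ)

lemma TT_state0_center :
    (TT N₁ N₂ sd hdim dim1 dim2 C O).state (TG2 a b) 0 0 = sC N₁ N₂ C a := by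
  show C.eval (Fin.append
      (N₁.toMPNN.run ((TG2 a b).adj 0)
        (fun u => Vec.cast dim1.symm ((TG2 a b).colVec 0 u)) 0)
      (N₂.toMPNN.run ((TG2 a b).adj 0)
        (fun _ => Vec.cast dim2.symm (fun _ => 0)) 0)) = _
  have hL1 : (fun u : Fin (a+b+1) => Vec.cast dim1.symm ((TG2 a b).colVec 0 u))
      = (fun _ => zz N₁) := by
    funext u; rw [TG2_colVec]; rfl
  have hL2 : (fun _ : Fin (a+b+1) => Vec.cast dim2.symm (fun _ => (0:ℝ)))
      = (fun _ => zz N₂) := rfl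
  rw [MPNN.run_def, MPNN.run_def, hL1, hL2, TG2_adj0]
  have e1 := (star_emb N₁.toMPNN (0 : Fin (a+b+1)) (SA a b) (zero_not_mem_SA a b)
    (fun _ => zz N₁) (zz N₁) (fun _ _ => rfl) N₁.toMPNN.depth).1
  have e2 := (star_emb N₂.toMPNN (0 : Fin (a+b+1)) (SA a b) (zero_not_mem_SA a b)
    (fun _ => zz N₂) (zz N₂) (fun _ _ => rfl) N₂.toMPNN.depth).1
  rw [e1, e2, card_SA]
  rfl

lemma TT_state0_fresh (u : Fin (a + b + 1)) (hu : u ∈ SB a b) :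
    (TT N₁ N₂ sd hdim dim1 dim2 C O).state (TG2 a b) 0 u = sC N₁ N₂ C 0 := by
  show C.eval (Fin.append
      (N₁.toMPNN.run ((TG2 a b).adj 0)
        (fun w => Vec.cast dim1.symm ((TG2 a b).colVec 0 w)) u)
      (N₂.toMPNN.run ((TG2 a b).adj 0)
        (fun _ => Vec.cast dim2.symm (fun _ => 0)) u)) = _
  have hL1 : (fun w : Fin (a+b+1) => Vec.cast dim1.symm ((TG2 a b).colVec 0 w))
      = (fun _ => zz N₁) := by
    funext w; rw [TG2_colVec]; rfl
  have hL2 : (fun _ : Fin (a+b+1) => Vec.cast dim2.symm (fun _ => (0:ℝ)))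
      = (fun _ => zz N₂) := rfl
  rw [MPNN.run_def, MPNN.run_def, hL1, hL2, TG2_adj0]
  have e1 := (star_emb N₁.toMPNN (0 : Fin (a+b+1)) (SA a b) (zero_not_mem_SA a b)
    (fun _ => zz N₁) (zz N₁) (fun _ _ => rfl) N₁.toMPNN.depth).2.2
    u (SB_ne_zero hu) (SB_not_mem_SA hu)
  have e2 := (star_emb N₂.toMPNN (0 : Fin (a+b+1)) (SA a b) (zero_not_mem_SA a b)
    (fun _ => zz N₂) (zz N₂) (fun _ _ => rfl) N₂.toMPNN.depth).2.2
    u (SB_ne_zero hu) (SB_not_mem_SA hu)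
  rw [e1, e2]
  rfl

lemma TT_output :
    (TT N₁ N₂ sd hdim dim1 dim2 C O).output (TG2 a b) 0
      = O.eval (C.eval (Fin.append
          ((starSeq N₁.toMPNN b (zz N₁) (zz N₁) N₁.toMPNN.depth).1)
          ((starSeq N₂.toMPNN b (Vec.cast dim2.symm (sC N₁ N₂ C a))
              (Vec.cast dim2.symm (sC N₁ N₂ C 0)) N₂.toMPNN.depth).1))) 0 := by
  show O.eval (C.eval (Fin.append
      (N₁.toMPNN.run ((TG2 a b).adj (0+1))
        (fun u => Vec.cast dim1.symm ((TG2 a b).colVec (0+1) u)) 0)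
      (N₂.toMPNN.run ((TG2 a b).adj (0+1))
        (fun u => Vec.cast dim2.symm
          ((TT N₁ N₂ sd hdim dim1 dim2 C O).state (TG2 a b) 0 u)) 0))) 0 = _
  have hL1 : (fun u : Fin (a+b+1) => Vec.cast dim1.symm ((TG2 a b).colVec (0+1) u))
      = (fun _ => zz N₁) := by
    funext u; rw [TG2_colVec]; rfl
  have hadj1 : (TG2 a b).adj (0+1) = starAdj 0 (SB a b) := rfl
  rw [MPNN.run_def, MPNN.run_def, hL1, hadj1]
  have e1 := (star_emb N₁.toMPNN (0 : Fin (a+b+1)) (SB a b) (zero_not_mem_SB a b)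
    (fun _ => zz N₁) (zz N₁) (fun _ _ => rfl) N₁.toMPNN.depth).1
  have e2 := (star_emb N₂.toMPNN (0 : Fin (a+b+1)) (SB a b) (zero_not_mem_SB a b)
    (fun u => Vec.cast dim2.symm
      ((TT N₁ N₂ sd hdim dim1 dim2 C O).state (TG2 a b) 0 u))
    (Vec.cast dim2.symm (sC N₁ N₂ C 0))
    (fun u hu => by
      show Vec.cast dim2.symm ((TT N₁ N₂ sd hdim dim1 dim2 C O).state (TG2 a b) 0 u) = _
      rw [TT_state0_fresh N₁ N₂ sd hdim dim1 dim2 C O a b u hu])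
    N₂.toMPNN.depth).1
  rw [e1, e2, card_SB]
  rw [TT_state0_center N₁ N₂ sd hdim dim1 dim2 C O a b]

lemma TT_key :
    ∃ D : ℕ, ∀ b' a₁ a₂ : ℕ, D ≤ a₁ → D ≤ a₂ →
      (TT N₁ N₂ sd hdim dim1 dim2 C O).output (TG2 a₁ b') 0
        = (TT N₁ N₂ sd hdim dim1 dim2 C O).output (TG2 a₂ b') 0 := by
  have hEP : ∀ j, EvPoly fun a' =>
      Fin.append ((starSeq N₁.toMPNN a' (zz N₁) (zz N₁) N₁.toMPNN.depth).1)
                 ((starSeq N₂.toMPNN a' (zz N₂) (zz N₂) N₂.toMPNN.depth).1) j :=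
    Fin.append_evPoly _ _
      (fun j => (starSeq_evPoly N₁ (zz N₁) (zz N₁) N₁.toMPNN.depth).1 j)
      (fun j => (starSeq_evPoly N₂ (zz N₂) (zz N₂) N₂.toMPNN.depth).1 j)
  have hEC : ∀ j, EvConst fun a' => sC N₁ N₂ C a' j :=
    fun j => AffineLayer.eval_evConst C _ hEP j
  obtain ⟨D, hD⟩ := vec_evConst (sC N₁ N₂ C) hEC
  refine ⟨D, fun b' a₁ a₂ h1 h2 => ?_⟩
  rw [TT_output N₁ N₂ sd hdim dim1 dim2 C O a₁ b',
      TT_output N₁ N₂ sd hdim dim1 dim2 C O a₂ b',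
      hD a₁ h1, hD a₂ h2]

end Dir2c

lemma not_GlobLeTandG : ¬ GlobLeTandG := by
  intro h
  obtain ⟨T', hF, heq⟩ := h 1 Tg
  obtain ⟨M₁, M₂, sd, hdim, dim1, dim2, cell, out⟩ := T'
  obtain ⟨⟨N₁, hN1⟩, ⟨N₂, hN2⟩, ⟨C, hC⟩, ⟨O, hO⟩⟩ := hF
  replace hN1 : M₁ = N₁.toMPNN := hN1
  replace hN2 : M₂ = N₂.toMPNN := hN2
  subst hN1; subst hN2
  replace hC : cell = fun x y => C.eval (Fin.append x y) :=
    funext fun x => funext fun y => hC x y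
  replace hO : out = fun x => O.eval x 0 := funext fun x => hO x
  rw [hC, hO] at heq
  have hTT : (⟨N₁.toMPNN, N₂.toMPNN, sd, hdim, dim1, dim2,
      fun x y => C.eval (Fin.append x y), fun x => O.eval x 0⟩ : TandGTGNN 1)
      = TT N₁ N₂ sd hdim dim1 dim2 C O := rfl
  obtain ⟨D, hD⟩ := TT_key N₁ N₂ sd hdim dim1 dim2 C O
  have h1 := heq (Fin (D + (D + 1) + 1)) (TG2 D (D + 1)) 0
  have h2 := heq (Fin ((D + 2) + (D + 1) + 1)) (TG2 (D + 2) (D + 1)) 0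
  rw [hTT] at h1 h2
  rw [Tg_output] at h1 h2
  have v1 : trReLU (trReLU ((D : ℝ) - ((D + 1 : ℕ) : ℝ))) = 0 := by
    have hle : ((D : ℝ) - ((D + 1 : ℕ) : ℝ)) ≤ 0 := by push_cast; linarith
    rw [trReLU_of_nonpos hle, trReLU_of_nonpos le_rfl]
  have v2 : trReLU (trReLU (((D + 2 : ℕ) : ℝ) - ((D + 1 : ℕ) : ℝ))) = 1 := by
    have hge : (1 : ℝ) ≤ ((D + 2 : ℕ) : ℝ) - ((D + 1 : ℕ) : ℝ) := by push_cast; linarith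
    rw [trReLU_of_one_le hge, trReLU_of_one_le le_rfl]
  rw [v1] at h1
  rw [v2] at h2
  have hout2 : (TT N₁ N₂ sd hdim dim1 dim2 C O).output (TG2 (D + 2) (D + 1)) 0 = 1 :=
    h2.mp rfl
  have hout1 : (TT N₁ N₂ sd hdim dim1 dim2 C O).output (TG2 D (D + 1)) 0 = 1 := by
    rw [hD (D + 1) D (D + 2) le_rfl (by omega)]
    exact hout2
  have : (0 : ℝ) = 1 := h1.mpr hout1
  norm_num at this

/-- part of Corollary 8: the classes `T_TandG[M̂,F]` and
`T_glob[M̂_msg, Q_time2vec, ∥]` are incomparable; in particular they are not equivalent. -/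
theorem TandG_glob_incomparable :
    ¬ TandGleGlob ∧ ¬ GlobLeTandG ∧ ¬ (TandGleGlob ∧ GlobLeTandG) := by
  exact ⟨not_TandGleGlob, not_GlobLeTandG, fun h => not_TandGleGlob h.1⟩
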